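/- Let H be a finite abelian group (written multiplicatively) of odd order, and let q : ℕ → H → ℝ[x,x⁻¹] be such that each q_{j,g} has nonnegative coefficients, Σ_{g∈H} q_{j,g}(1) = 1 for every j, and q_{j,g} = q_{j,g⁻¹} for all j and g (the symmetric case). Suppose that for every maximal proper subgroup K of H the series Σ_j (Σ_{g ∉ K} q_{j,g}(1)) diverges. Then the sequence is hollow: for every character α ≠ 1 of H and every j₀ ≥ 0, the l¹ norms ‖∏_{j=j₀}^{j₀+d} p_{α,j}‖₁ tend to 0 as d → ∞, where p_{α,j} := Σ_{g∈H} α(g⁻¹)·q_{j,g} ∈ ℂ[x,x⁻¹]. -/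

import Mathlib

open Finsupp Filter

/-- The coefficients of a real Laurent polynomial. -/
def lcoeff (p : AddMonoidAlgebra ℝ ℤ) : ℤ →₀ ℝ := p.coeff

/-- The coefficients of a complex Laurent polynomial. -/
def lcoeffC (p : AddMonoidAlgebra ℂ ℤ) : ℤ →₀ ℂ := p.coeff

/-- The `l¹` norm of a complex Laurent polynomial. -/
noncomputable def l1C (p : AddMonoidAlgebra ℂ ℤ) : ℝ := (lcoeffC p).sum fun _ c => ‖c‖

/-- Evaluation of a real Laurent polynomial at `x = 1`. -/
noncomputable def ev1 (p : AddMonoidAlgebra ℝ ℤ) : ℝ := (lcoeff p).sum fun _ c => c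

/-- A real Laurent polynomial viewed as a complex Laurent polynomial. -/
noncomputable def toC (p : AddMonoidAlgebra ℝ ℤ) : AddMonoidAlgebra ℂ ℤ :=
  AddMonoidAlgebra.ofCoeff (Finsupp.mapRange (fun r : ℝ => (r : ℂ)) Complex.ofReal_zero (lcoeff p))

lemma l1C_nonneg (p : AddMonoidAlgebra ℂ ℤ) : 0 ≤ l1C p :=
  Finset.sum_nonneg fun _ _ => norm_nonneg _

lemma l1C_eq_sum {p : AddMonoidAlgebra ℂ ℤ} {S : Finset ℤ} (h : (lcoeffC p).support ⊆ S) :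
    l1C p = ∑ n ∈ S, ‖p.coeff n‖ :=
  Finsupp.sum_of_support_subset _ h _ (fun _ _ => norm_zero)

lemma ev1_eq_sum {p : AddMonoidAlgebra ℝ ℤ} {S : Finset ℤ} (h : (lcoeff p).support ⊆ S) :
    ev1 p = ∑ n ∈ S, lcoeff p n :=
  Finsupp.sum_of_support_subset _ h _ (fun _ _ => rfl)

lemma l1C_single (a : ℤ) (c : ℂ) : l1C (AddMonoidAlgebra.single a c) = ‖c‖ := by
  show (Finsupp.single a c).sum (fun _ c => ‖c‖) = ‖c‖
  exact Finsupp.sum_single_index norm_zero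

lemma l1C_sum_le {ι : Type*} (s : Finset ι) (f : ι → AddMonoidAlgebra ℂ ℤ) :
    l1C (∑ i ∈ s, f i) ≤ ∑ i ∈ s, l1C (f i) := by
  classical
  induction s using Finset.induction with
  | empty => simp [l1C, lcoeffC]
  | insert a s hx ih =>
    rw [Finset.sum_insert hx, Finset.sum_insert hx]
    refine le_trans ?_ (add_le_add_right ih _)
    set P := f a
    set Q := ∑ i ∈ s, f i
    have hsub : (lcoeffC (P + Q)).support ⊆ (lcoeffC P).support ∪ (lcoeffC Q).support :=
      Finsupp.support_add
    rw [l1C_eq_sum hsub, l1C_eq_sum (Finset.subset_union_left (s₂ := (lcoeffC Q).support)),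
      l1C_eq_sum (Finset.subset_union_right (s₁ := (lcoeffC P).support)), ← Finset.sum_add_distrib]
    exact Finset.sum_le_sum fun n _ => norm_add_le _ _

lemma l1C_mul_le (p r : AddMonoidAlgebra ℂ ℤ) : l1C (p * r) ≤ l1C p * l1C r := by
  rw [AddMonoidAlgebra.mul_def]
  unfold Finsupp.sum
  refine le_trans (l1C_sum_le _ _) ?_
  have h1 : l1C p * l1C r
      = ∑ a ∈ (lcoeffC p).support, ∑ b ∈ (lcoeffC r).support, ‖p.coeff a‖ * ‖r.coeff b‖ := by
    rw [l1C, l1C, Finsupp.sum, Finsupp.sum, Finset.sum_mul_sum]; rfl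
  rw [h1]
  refine Finset.sum_le_sum fun a _ => ?_
  refine le_trans (l1C_sum_le _ _) (Finset.sum_le_sum fun b _ => ?_)
  rw [l1C_single, norm_mul]

lemma l1C_one : l1C 1 = 1 := by
  rw [AddMonoidAlgebra.one_def, l1C_single, norm_one]

lemma l1C_prod_le {ι : Type*} (s : Finset ι) (f : ι → AddMonoidAlgebra ℂ ℤ) :
    l1C (∏ i ∈ s, f i) ≤ ∏ i ∈ s, l1C (f i) := by
  classical
  induction s using Finset.induction with
  | empty => simp [l1C_one]
  | insert a s hx ih =>
    rw [Finset.prod_insert hx, Finset.prod_insert hx]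
    exact le_trans (l1C_mul_le _ _) (mul_le_mul_of_nonneg_left ih (l1C_nonneg _))


open scoped Classical in
/-- Proposition 2.3 (final assertion): if `|H|` is odd, then every ergodic symmetric
sequence of hemicirculant coefficient families is hollow; here ergodicity is given in
the form of Lemma 1.1(iii): for every maximal proper subgroup `K` of `H` the series
`∑_j ∑_{g ∉ K} q_{j,g}(1)` diverges. -/
theorem odd_order_symmetric_hollow {H : Type} [CommGroup H] [Fintype H]
    (hodd : Odd (Fintype.card H))
    (q : ℕ → H → AddMonoidAlgebra ℝ ℤ)
    (hpos : ∀ j g m, 0 ≤ lcoeff (q j g) m)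
    (hsum : ∀ j, ∑ g, ev1 (q j g) = 1)
    (hsymm : ∀ j g, q j g = q j g⁻¹)
    (hdiv : ∀ K : Subgroup H, IsCoatom K →
      ¬ Summable (fun j => ∑ g, if g ∈ K then 0 else ev1 (q j g))) :
    ∀ α : H →* ℂ, α ≠ 1 → ∀ j₀ : ℕ,
      Tendsto
        (fun d => l1C (∏ j ∈ Finset.Icc j₀ (j₀ + d), ∑ g, α g⁻¹ • toC (q j g)))
        atTop (nhds 0) := by
  intro α hα j₀
  -- the character takes unit values
  have hcard : Fintype.card H ≠ 0 := Fintype.card_ne_zero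
  have hpow : ∀ g : H, (α g) ^ Fintype.card H = 1 := fun g => by
    rw [← map_pow, pow_card_eq_one, map_one]
  have habs : ∀ g : H, ‖α g‖ = 1 := fun g =>
    Complex.norm_eq_one_of_pow_eq_one (hpow g) hcard
  have hconj : ∀ g : H, α g⁻¹ = starRingEnd ℂ (α g) := by
    intro g
    have h1 : α g * α g⁻¹ = 1 := by rw [← map_mul, mul_inv_cancel, map_one]
    rw [eq_inv_of_mul_eq_one_right h1, Complex.inv_eq_conj (habs g)]
  -- pick a coatom above the kernel of α
  have hker : (MonoidHom.ker α) ≠ ⊤ := by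
    intro h
    apply hα
    ext g
    have : g ∈ MonoidHom.ker α := h ▸ Subgroup.mem_top g
    simpa [MonoidHom.mem_ker] using this
  obtain ⟨K, hK, hle⟩ := (eq_top_or_exists_le_coatom (MonoidHom.ker α)).resolve_left hker
  have hKne : (Finset.univ.filter (fun g : H => g ∉ K)).Nonempty := by
    have : ∃ g : H, g ∉ K := by
      by_contra h
      push_neg at h
      exact hK.1 ((Subgroup.eq_top_iff' K).2 h)
    obtain ⟨g, hg⟩ := this
    exact ⟨g, Finset.mem_filter.2 ⟨Finset.mem_univ g, hg⟩⟩
  set ρ : ℝ := (Finset.univ.filter (fun g : H => g ∉ K)).sup' hKne (fun g => |(α g).re|) with hρ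
  have hρ0 : 0 ≤ ρ := by
    obtain ⟨g, hg⟩ := hKne
    exact le_trans (abs_nonneg ((α g).re)) (Finset.le_sup' (fun g => |(α g).re|) hg)
  have hρ1 : ρ < 1 := by
    rw [hρ, Finset.sup'_lt_iff]
    intro g hg
    have hgK : g ∉ K := (Finset.mem_filter.1 hg).2
    have hne1 : α g ≠ 1 := fun h => hgK (hle (MonoidHom.mem_ker.2 h))
    have h1 : |(α g).re| ≤ 1 := (Complex.abs_re_le_norm (α g)).trans_eq (habs g)
    rcases lt_or_eq_of_le h1 with h | h
    · exact h
    · exfalso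
      have hsq : (α g).re ^ 2 + (α g).im ^ 2 = 1 := by
        have := Complex.sq_norm (α g)
        rw [Complex.normSq_apply] at this
        have h2 : ‖α g‖ = 1 := habs g
        nlinarith [this]
      have him : (α g).im = 0 := by nlinarith [sq_abs ((α g).re), abs_abs ((α g).re)]
      have hre : (α g).re = 1 ∨ (α g).re = -1 := by
        rcases (abs_eq (le_of_lt one_pos)).1 h with h' | h'
        · exact Or.inl h'
        · exact Or.inr h'
      rcases hre with h' | h'
      · exact hne1 (Complex.ext h' him)
      · have hm1 : α g = -1 := by
          apply Complex.ext <;> simp [h', him]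
        have := hpow g
        rw [hm1, hodd.neg_one_pow] at this
        exact (by norm_num : (-1 : ℂ) ≠ 1) this
  -- the key coefficient identity and per-step bound
  set t : ℕ → ℝ := fun j => ∑ g, if g ∈ K then 0 else ev1 (q j g) with ht
  have hev1 : ∀ j g, 0 ≤ ev1 (q j g) := fun j g =>
    Finset.sum_nonneg fun n _ => hpos j g n
  have ht0 : ∀ j, 0 ≤ t j := by
    intro j
    refine Finset.sum_nonneg fun g _ => ?_
    split
    · exact le_refl 0
    · exact hev1 j g
  have ht1 : ∀ j, t j ≤ 1 := by
    intro j
    rw [← hsum j]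
    refine Finset.sum_le_sum fun g _ => ?_
    split
    · exact hev1 j g
    · exact le_refl _
  set P : ℕ → AddMonoidAlgebra ℂ ℤ := fun j => ∑ g, α g⁻¹ • toC (q j g) with hP
  have hcoeff : ∀ j n, (P j).coeff n = ((∑ g, (α g).re * lcoeff (q j g) n : ℝ) : ℂ) := by
    intro j n
    have h1 : (P j).coeff n = ∑ g, α g⁻¹ * ((lcoeff (q j g) n : ℝ) : ℂ) := by
      rw [hP]
      rw [AddMonoidAlgebra.coeff_sum, Finset.sum_apply']
      refine Finset.sum_congr rfl fun g _ => ?_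
      rw [AddMonoidAlgebra.coeff_smul_apply, smul_eq_mul]
      rfl
    have h2 : ∑ g, α g * ((lcoeff (q j g) n : ℝ) : ℂ)
        = ∑ g, α g⁻¹ * ((lcoeff (q j g) n : ℝ) : ℂ) := by
      refine Fintype.sum_equiv (Equiv.inv H) _ _ fun g => ?_
      simp only [Equiv.inv_apply, inv_inv]
      rw [show lcoeff (q j g⁻¹) = lcoeff (q j g) from (congrArg lcoeff (hsymm j g)).symm]
    have h3 : (2 : ℂ) * (P j).coeff n
        = ∑ g, ((α g + starRingEnd ℂ (α g)) * ((lcoeff (q j g) n : ℝ) : ℂ)) := by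
      have : (2 : ℂ) * (P j).coeff n
          = (∑ g, α g * ((lcoeff (q j g) n : ℝ) : ℂ))
            + (∑ g, α g⁻¹ * ((lcoeff (q j g) n : ℝ) : ℂ)) := by
        rw [h1, h2]; ring
      rw [this, ← Finset.sum_add_distrib]
      refine Finset.sum_congr rfl fun g _ => ?_
      rw [← hconj g]; ring
    have h4 : (2 : ℂ) * (P j).coeff n = 2 * ((∑ g, (α g).re * lcoeff (q j g) n : ℝ) : ℂ) := by
      rw [h3]
      push_cast
      rw [Finset.mul_sum]
      refine Finset.sum_congr rfl fun g _ => ?_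
      rw [Complex.add_conj]
      push_cast
      ring
    have h5 := mul_left_cancel₀ (two_ne_zero' ℂ) h4
    exact h5
  have hstep : ∀ j, l1C (P j) ≤ 1 - (1 - ρ) * t j := by
    intro j
    set S : Finset ℤ := Finset.univ.biUnion (fun g : H => (lcoeff (q j g)).support) with hS
    have hsubS : ∀ g : H, (lcoeff (q j g)).support ⊆ S := by
      intro g
      rw [hS]
      exact Finset.subset_biUnion_of_mem (fun g : H => (lcoeff (q j g)).support) (Finset.mem_univ g)
    have hsupP : (lcoeffC (P j)).support ⊆ S := by
      intro n hn
      rw [Finsupp.mem_support_iff] at hn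
      by_contra hnS
      apply hn
      have hz : ∀ g : H, lcoeff (q j g) n = 0 := by
        intro g
        by_contra h
        exact hnS (Finset.mem_biUnion.2 ⟨g, Finset.mem_univ g, Finsupp.mem_support_iff.2 h⟩)
      show (P j).coeff n = 0
      rw [hcoeff j n]
      simp [hz]
    rw [l1C_eq_sum hsupP]
    have hb : ∀ n ∈ S, ‖(P j).coeff n‖ ≤ ∑ g, (if g ∈ K then (1:ℝ) else ρ) * lcoeff (q j g) n := by
      intro n _
      rw [hcoeff j n, Complex.norm_real, Real.norm_eq_abs]
      refine le_trans (Finset.abs_sum_le_sum_abs _ _) ?_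
      refine Finset.sum_le_sum fun g _ => ?_
      rw [abs_mul, abs_of_nonneg (hpos j g n)]
      refine mul_le_mul_of_nonneg_right ?_ (hpos j g n)
      split
      · calc |(α g).re| ≤ ‖α g‖ := Complex.abs_re_le_norm _
          _ = 1 := habs g
      · rename_i hgK
        exact Finset.le_sup' (fun g => |(α g).re|)
          (Finset.mem_filter.2 ⟨Finset.mem_univ g, hgK⟩)
    refine le_trans (Finset.sum_le_sum hb) ?_
    rw [Finset.sum_comm]
    have hgsum : ∀ g : H, (∑ n ∈ S, (if g ∈ K then (1:ℝ) else ρ) * lcoeff (q j g) n)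
        = (if g ∈ K then (1:ℝ) else ρ) * ev1 (q j g) := by
      intro g
      rw [← Finset.mul_sum, ← ev1_eq_sum (hsubS g)]
    rw [Finset.sum_congr rfl fun g _ => hgsum g]
    have harith : ∀ g : H, (if g ∈ K then (1:ℝ) else ρ) * ev1 (q j g)
        = ev1 (q j g) - (1 - ρ) * (if g ∈ K then 0 else ev1 (q j g)) := by
      intro g; split <;> ring
    rw [Finset.sum_congr rfl fun g _ => harith g, Finset.sum_sub_distrib, hsum j,
      ← Finset.mul_sum]
  have hchain : ∀ d, l1C (∏ j ∈ Finset.Icc j₀ (j₀ + d), P j)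
      ≤ Real.exp (-((1 - ρ) * ∑ j ∈ Finset.Icc j₀ (j₀ + d), t j)) := by
    intro d
    refine le_trans (l1C_prod_le _ _) ?_
    refine le_trans (Finset.prod_le_prod (fun j _ => l1C_nonneg _) (fun j _ => hstep j)) ?_
    have hnn : ∀ j ∈ Finset.Icc j₀ (j₀ + d), (0:ℝ) ≤ 1 - (1 - ρ) * t j := by
      intro j _
      have := mul_le_one₀ (by linarith : (1:ℝ) - ρ ≤ 1) (ht0 j) (ht1 j)
      linarith
    have hexp : ∀ j ∈ Finset.Icc j₀ (j₀ + d), 1 - (1 - ρ) * t j ≤ Real.exp (-((1 - ρ) * t j)) := by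
      intro j _
      linarith [Real.add_one_le_exp (-((1 - ρ) * t j))]
    refine le_trans (Finset.prod_le_prod hnn hexp) (le_of_eq ?_)
    rw [← Real.exp_sum]
    congr 1
    rw [Finset.mul_sum, ← Finset.sum_neg_distrib]
  have hT : Tendsto (fun d => ∑ j ∈ Finset.Icc j₀ (j₀ + d), t j) atTop atTop := by
    have hns : ¬ Summable t := hdiv K hK
    have hSsum := (not_summable_iff_tendsto_nat_atTop_of_nonneg ht0).1 hns
    have hIcc : ∀ d, ∑ j ∈ Finset.Icc j₀ (j₀ + d), t j
        = (∑ j ∈ Finset.range (j₀ + d + 1), t j) - ∑ j ∈ Finset.range j₀, t j := by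
      intro d
      rw [← Finset.Ico_add_one_right_eq_Icc, Finset.sum_Ico_eq_sub _ (by omega)]
    rw [tendsto_congr hIcc]
    have h1 : Tendsto (fun d => ∑ j ∈ Finset.range (j₀ + d + 1), t j) atTop atTop := by
      refine hSsum.comp ?_
      exact tendsto_atTop_mono (fun d => (by omega : d ≤ j₀ + d + 1)) tendsto_id
    exact tendsto_atTop_add_const_right _ _ h1 |>.congr (fun d => by rw [sub_eq_add_neg])
  refine squeeze_zero (fun d => l1C_nonneg _) hchain ?_
  have hneg : Tendsto (fun d => -((1 - ρ) * ∑ j ∈ Finset.Icc j₀ (j₀ + d), t j)) atTop atBot := by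
    have := hT.const_mul_atTop_of_neg (show -(1 - ρ) < 0 by linarith)
    refine this.congr (fun d => by ring)
  exact Real.tendsto_exp_atBot.comp hneg
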